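/- arXiv:2506.17069 — 2 statements merged into one kernel-verified Lean document; each statement's English description precedes it below -/
import Mathlib

section
/- In the abstract algebra O[α;ν] defined by generators A(g) (g ∈ S_α), Θ_1,…,Θ_α and relations A(g₁)A(g₂)=A(g₁g₂), A(g)Θ_iA(g⁻¹)=Θ_{g(i)}, Θ_j²=(ν−1)Θ_j+νA(1), Θ_jΘ_i−Θ_iΘ_j=A((ij))(Θ_j−Θ_i), (A((ij))−A(1))Θ_j(Θ_i+A(1))=0, the elements A(g)Θ_{i_1}⋯Θ_{i_k} with i_1<⋯<i_k and g(i_1)<⋯<g(i_k) span O[α;ν]; hence dim O[α;ν] ≤ #Π_α. -/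
open Equiv


/-- Count of inversions in a list. -/
def invc {γ : Type*} [LinearOrder γ] : List γ → ℕ
  | [] => 0
  | a :: t => t.countP (fun x => decide (x < a)) + invc t

lemma invc_swap {γ : Type*} [LinearOrder γ] (l₁ l₂ : List γ) {a b : γ} (h : b < a) :
    invc (l₁ ++ a :: b :: l₂) = invc (l₁ ++ b :: a :: l₂) + 1 := by
  induction l₁ with
  | nil =>
    simp only [List.nil_append, invc, List.countP_cons]
    have h1 : ¬ a < b := not_lt.mpr h.le
    simp [h, h1]
    omega
  | cons c t ih =>
    simp only [List.cons_append, invc]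
    have hcnt : (t ++ a :: b :: l₂).countP (fun x => decide (x < c)) =
        (t ++ b :: a :: l₂).countP (fun x => decide (x < c)) := by
      have : (t ++ a :: b :: l₂).Perm (t ++ b :: a :: l₂) :=
        List.Perm.append_left t (List.Perm.swap b a l₂)
      exact this.countP_eq _
    rw [hcnt, ih]
    omega

lemma exists_break {γ : Type*} {R : γ → γ → Prop} :
    ∀ {l : List γ}, ¬ l.Chain' R → ∃ l₁ a b l₂, l = l₁ ++ a :: b :: l₂ ∧ ¬ R a b
  | [], h => absurd List.isChain_nil h
  | [a], h => absurd (List.isChain_singleton a) h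
  | a :: b :: t, h => by
    unfold List.Chain' at h
    rw [List.isChain_cons_cons] at h
    by_cases hab : R a b
    · have ht : ¬ (b :: t).Chain' R := fun hc => h ⟨hab, hc⟩
      obtain ⟨l₁, x, y, l₂, heq, hxy⟩ := exists_break ht
      exact ⟨a :: l₁, x, y, l₂, by rw [List.cons_append, ← heq], hxy⟩
    · exact ⟨[], a, b, t, rfl, hab⟩

lemma sorted_map_mono {γ δ : Type*} [Preorder γ] [Preorder δ] {g : γ → δ} :
    ∀ {l : List γ}, l.Pairwise (· < ·) → (l.map g).Pairwise (· < ·) →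
      ∀ i ∈ l, ∀ j ∈ l, i < j → g i < g j
  | [], _, _ => by simp
  | a :: t, h1, h2 => by
    rw [List.pairwise_cons] at h1
    rw [List.map_cons, List.pairwise_cons] at h2
    intro i hi j hj hij
    rcases List.mem_cons.mp hi with rfl | hi'
    · rcases List.mem_cons.mp hj with rfl | hj'
      · exact absurd hij (lt_irrefl _)
      · exact h2.1 _ (List.mem_map_of_mem (f := g) hj')
    · rcases List.mem_cons.mp hj with rfl | hj'
      · exact absurd hij (asymm (h1.1 i hi'))
      · exact sorted_map_mono h1.2 h2.2 i hi' j hj' hij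

section Alg
set_option linter.unusedSectionVars false
variable {α : ℕ} {ν : ℂ} {B : Type} [Ring B] [Algebra ℂ B]
variable (A : Perm (Fin α) → B) (Θ : Fin α → B)

def Mset : Set B :=
  {x : B | ∃ (g : Perm (Fin α)) (s : Finset (Fin α)),
      (∀ i ∈ s, ∀ j ∈ s, i < j → g i < g j) ∧
      x = A g * ((s.sort (· ≤ ·)).map Θ).prod}

variable {A Θ}
variable (hA : ∀ g₁ g₂, A g₁ * A g₂ = A (g₁ * g₂)) (hA1 : A 1 = 1)
variable (hconj : ∀ (g : Perm (Fin α)) (i : Fin α), A g * Θ i * A g⁻¹ = Θ (g i))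
variable (hsq : ∀ j, Θ j * Θ j = (ν - 1) • Θ j + ν • A 1)
variable (hcomm : ∀ i j, Θ j * Θ i - Θ i * Θ j = A (Equiv.swap i j) * (Θ j - Θ i))
variable (hrel : ∀ i j, (A (Equiv.swap i j) - A 1) * Θ j * (Θ i + A 1) = 0)

include hA hA1 in
lemma hAinv (g : Perm (Fin α)) : A g⁻¹ * A g = 1 := by rw [hA, inv_mul_cancel, hA1]

include hA hA1 hconj in
lemma push (g : Perm (Fin α)) (k : Fin α) : A g * Θ k = Θ (g k) * A g := by
  have h2 : A g * Θ k * A g⁻¹ * A g = Θ (g k) * A g := by rw [hconj]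
  rwa [mul_assoc (A g * Θ k), hAinv hA hA1, mul_one] at h2

include hA hA1 hconj in
lemma pushP (g : Perm (Fin α)) : ∀ l : List (Fin α),
    A g * (l.map Θ).prod = ((l.map g).map Θ).prod * A g
  | [] => by simp
  | a :: t => by
    simp only [List.map_cons, List.prod_cons]
    rw [← mul_assoc, push hA hA1 hconj, mul_assoc, pushP g t, ← mul_assoc]

include hA hA1 hconj in
lemma pushswapP {i j : Fin α} {l : List (Fin α)} (hl : ∀ x ∈ l, x ≠ i ∧ x ≠ j) :
    A (swap i j) * (l.map Θ).prod = (l.map Θ).prod * A (swap i j) := by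
  have hm : l.map (⇑(swap i j)) = l := by
    have : l.map (⇑(swap i j)) = l.map id :=
      List.map_congr_left fun x hx => swap_apply_of_ne_of_ne (hl x hx).1 (hl x hx).2
    simpa using this
  rw [pushP hA hA1 hconj, hm]

include hA hA1 in
lemma swapswap (i j : Fin α) : A (swap i j) * A (swap i j) = 1 := by
  rw [hA, swap_mul_self, hA1]


include hA hA1 hconj hrel in
lemma R3core (i j : Fin α) :
    A (swap i j) * (Θ i * Θ j) = Θ i * Θ j + Θ i - A (swap i j) * Θ i := by
  set τ := swap i j with hτ
  have eAi : A τ * Θ i = Θ j * A τ := by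
    rw [push hA hA1 hconj τ i, hτ, swap_apply_left]
  have eAj : A τ * Θ j = Θ i * A τ := by
    rw [push hA hA1 hconj τ j, hτ, swap_apply_right]
  have eAA : A τ * A τ = 1 := swapswap hA hA1 i j
  have h := hrel i j
  rw [hA1] at h
  have e1 : A τ * Θ j * Θ i + A τ * Θ j = Θ j * Θ i + Θ j := by
    have expand : (A τ - 1) * Θ j * (Θ i + 1) =
        A τ * Θ j * Θ i + A τ * Θ j - (Θ j * Θ i + Θ j) := by noncomm_ring
    rw [expand] at h
    exact sub_eq_zero.mp h
  have e2 : Θ j * Θ i = A τ * Θ j * Θ i + A τ * Θ j - Θ j := eq_sub_of_add_eq e1.symm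
  have c1 : A τ * Θ j * Θ i * A τ = Θ i * Θ j := by
    calc A τ * Θ j * Θ i * A τ = Θ i * A τ * Θ i * A τ := by rw [eAj]
    _ = Θ i * ((A τ * Θ i) * A τ) := by
        rw [mul_assoc (Θ i) (A τ) (Θ i), mul_assoc (Θ i) (A τ * Θ i) (A τ)]
    _ = Θ i * (Θ j * A τ * A τ) := by rw [eAi]
    _ = Θ i * (Θ j * (A τ * A τ)) := by rw [mul_assoc (Θ j) (A τ) (A τ)]
    _ = Θ i * Θ j := by rw [eAA, mul_one]
  have c2 : A τ * Θ j * A τ = Θ i := by rw [eAj, mul_assoc, eAA, mul_one]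
  have c3 : Θ j * A τ = A τ * Θ i := eAi.symm
  calc A τ * (Θ i * Θ j) = (A τ * Θ i) * Θ j := (mul_assoc _ _ _).symm
  _ = Θ j * (A τ * Θ j) := by rw [eAi, mul_assoc]
  _ = Θ j * (Θ i * A τ) := by rw [eAj]
  _ = (Θ j * Θ i) * A τ := (mul_assoc _ _ _).symm
  _ = (A τ * Θ j * Θ i + A τ * Θ j - Θ j) * A τ := by rw [← e2]
  _ = A τ * Θ j * Θ i * A τ + A τ * Θ j * A τ - Θ j * A τ := by noncomm_ring
  _ = Θ i * Θ j + Θ i - A τ * Θ i := by rw [c1, c2, c3]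

include hA hA1 hconj hsq hcomm hrel in
lemma spanA (n₁ : ℕ) : ∀ (n₂ n₃ : ℕ) (l : List (Fin α)) (g : Perm (Fin α)),
    l.length ≤ n₁ → invc l ≤ n₂ → invc (l.map g) ≤ n₃ →
    A g * (l.map Θ).prod ∈ Submodule.span ℂ (Mset A Θ) := by
  induction n₁ using Nat.strong_induction_on with | _ n₁ ih₁ => ?_
  intro n₂
  induction n₂ using Nat.strong_induction_on with | _ n₂ ih₂ => ?_
  intro n₃
  induction n₃ using Nat.strong_induction_on with | _ n₃ ih₃ => ?_
  intro l g h₁ h₂ h₃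
  by_cases hc1 : l.Chain' (· < ·)
  · by_cases hc2 : l.Chain' (fun x y => g x < g y)
    · -- generator case
      have hs : l.Pairwise (· < ·) := List.isChain_iff_pairwise.mp hc1
      haveI : IsTrans (Fin α) fun a b => g a < g b := ⟨fun _ _ _ h1 h2 => h1.trans h2⟩
      have hmap : (l.map g).Pairwise (· < ·) :=
        List.pairwise_map.mpr (List.isChain_iff_pairwise.mp hc2)
      have hnodup : l.Nodup := hs.nodup
      have hsort : l.toFinset.sort (· ≤ ·) = l :=
        (List.toFinset_sort (· ≤ ·) hnodup).mpr (hs.imp le_of_lt)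
      apply Submodule.subset_span
      refine ⟨g, l.toFinset, ?_, ?_⟩
      · intro i hi j hj hij
        exact sorted_map_mono hs hmap i (List.mem_toFinset.mp hi) j (List.mem_toFinset.mp hj) hij
      · rw [hsort]
    · -- R3 case : straighten g
      obtain ⟨l₁, i, j, l₂, hl, hij⟩ := exists_break hc2
      subst hl
      have hpw : List.Pairwise (· < ·) (l₁ ++ i :: j :: l₂) := List.isChain_iff_pairwise.mp hc1
      rw [List.pairwise_append] at hpw
      obtain ⟨pw₁, pw₂, hcross⟩ := hpw
      rw [List.pairwise_cons] at pw₂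
      obtain ⟨hi2, pw₂'⟩ := pw₂
      rw [List.pairwise_cons] at pw₂'
      obtain ⟨hj2, _⟩ := pw₂'
      have hij' : i < j := hi2 j List.mem_cons_self
      have hne₁ : ∀ x ∈ l₁, x ≠ i ∧ x ≠ j :=
        fun x hx => ⟨(hcross x hx i (by simp)).ne, (hcross x hx j (by simp)).ne⟩
      have hne₂ : ∀ x ∈ l₂, x ≠ i ∧ x ≠ j :=
        fun x hx => ⟨(hi2 x (by simp [hx])).ne', (hj2 x hx).ne'⟩
      have hgji : g j < g i :=
        lt_of_le_of_ne (not_lt.mp hij) (fun h => hij'.ne (g.injective h.symm))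
      set τ := swap i j with hτdef
      have hAgτ : A (g * τ) * A τ = A g := by
        rw [hA]; congr 1; rw [mul_assoc, swap_mul_self, mul_one]
      have comm₁ : A τ * (l₁.map Θ).prod = (l₁.map Θ).prod * A τ :=
        pushswapP hA hA1 hconj hne₁
      have core := R3core hA hA1 hconj hrel i j
      have key : A g * (((l₁ ++ i :: j :: l₂)).map Θ).prod
          = A (g * τ) * (((l₁ ++ i :: j :: l₂)).map Θ).prod
            + (A (g * τ) * (((l₁ ++ i :: l₂)).map Θ).prod
              - A g * (((l₁ ++ i :: l₂)).map Θ).prod) := by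
        simp only [List.map_append, List.map_cons, List.prod_append, List.prod_cons]
        calc A g * ((l₁.map Θ).prod * (Θ i * (Θ j * (l₂.map Θ).prod)))
            = A (g * τ) * (A τ * ((l₁.map Θ).prod * (Θ i * (Θ j * (l₂.map Θ).prod)))) := by
              rw [← mul_assoc (A (g * τ)) (A τ), hAgτ]
          _ = A (g * τ) * ((l₁.map Θ).prod * ((A τ * (Θ i * Θ j)) * (l₂.map Θ).prod)) := by
              rw [← mul_assoc (A τ), comm₁, mul_assoc ((l₁.map Θ).prod),
                ← mul_assoc (Θ i) (Θ j), ← mul_assoc (A τ)]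
          _ = A (g * τ) * ((l₁.map Θ).prod * ((Θ i * Θ j + Θ i - A τ * Θ i) * (l₂.map Θ).prod)) := by
              rw [core]
          _ = A (g * τ) * ((l₁.map Θ).prod * (Θ i * (Θ j * (l₂.map Θ).prod)))
              + (A (g * τ) * ((l₁.map Θ).prod * (Θ i * (l₂.map Θ).prod))
                - A (g * τ) * (A τ * ((l₁.map Θ).prod * (Θ i * (l₂.map Θ).prod)))) := by
              rw [← mul_assoc (A τ) ((l₁.map Θ).prod), comm₁, mul_assoc ((l₁.map Θ).prod) (A τ)]
              noncomm_ring
          _ = A (g * τ) * ((l₁.map Θ).prod * (Θ i * (Θ j * (l₂.map Θ).prod)))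
              + (A (g * τ) * ((l₁.map Θ).prod * (Θ i * (l₂.map Θ).prod))
                - A g * ((l₁.map Θ).prod * (Θ i * (l₂.map Θ).prod))) := by
              rw [← mul_assoc (A (g * τ)) (A τ), hAgτ]
      rw [key]
      have hmapg : (l₁ ++ i :: j :: l₂).map ⇑g = (l₁.map ⇑g) ++ g i :: g j :: (l₂.map ⇑g) := by
        simp
      have hmapgτ : (l₁ ++ i :: j :: l₂).map ⇑(g * τ)
          = (l₁.map ⇑g) ++ g j :: g i :: (l₂.map ⇑g) := by
        simp only [List.map_append, List.map_cons]
        congr 1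
        · refine List.map_congr_left fun x hx => ?_
          rw [Perm.mul_apply, hτdef, swap_apply_of_ne_of_ne (hne₁ x hx).1 (hne₁ x hx).2]
        · congr 1
          · rw [Perm.mul_apply, hτdef, swap_apply_left]
          congr 1
          · rw [Perm.mul_apply, hτdef, swap_apply_right]
          refine List.map_congr_left fun x hx => ?_
          rw [Perm.mul_apply, hτdef, swap_apply_of_ne_of_ne (hne₂ x hx).1 (hne₂ x hx).2]
      have hinv : invc ((l₁ ++ i :: j :: l₂).map ⇑g)
          = invc ((l₁ ++ i :: j :: l₂).map ⇑(g * τ)) + 1 := by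
        rw [hmapg, hmapgτ]; exact invc_swap _ _ hgji
      have hlen : (l₁ ++ i :: j :: l₂).length ≤ n₁ := h₁
      simp only [List.length_append, List.length_cons] at hlen
      refine Submodule.add_mem _ ?_ (Submodule.sub_mem _ ?_ ?_)
      · exact ih₃ (invc ((l₁ ++ i :: j :: l₂).map ⇑(g * τ))) (by omega) _ _ h₁ h₂ le_rfl
      · refine ih₁ (l₁ ++ i :: l₂).length (by simp; omega) _ _ _ _ le_rfl le_rfl le_rfl
      · refine ih₁ (l₁ ++ i :: l₂).length (by simp; omega) _ _ _ _ le_rfl le_rfl le_rfl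
  · -- not sorted: phase 1
    obtain ⟨l₁, a, b, l₂, hl, hab⟩ := exists_break hc1
    subst hl
    have hlen : (l₁ ++ a :: b :: l₂).length ≤ n₁ := h₁
    simp only [List.length_append, List.length_cons] at hlen
    rcases (not_lt.mp hab).lt_or_eq with hba | heq
    · -- b < a : commute
      set τ := swap b a with hτdef
      have hτθ : Θ a * Θ b = Θ b * Θ a + (A τ * Θ a - A τ * Θ b) := by
        have h := hcomm b a
        rw [mul_sub] at h
        exact sub_eq_iff_eq_add'.mp h
      have hmm : A (g * τ) * (((l₁.map ⇑τ).map Θ)).prod = A g * (l₁.map Θ).prod * A τ := by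
        rw [← hA g τ, mul_assoc, pushP hA hA1 hconj τ]
        have : (l₁.map ⇑τ).map ⇑τ = l₁ := by
          rw [List.map_map]
          have : (⇑τ ∘ ⇑τ) = id := by funext x; simp [hτdef, swap_apply_self]
          rw [this, List.map_id]
        rw [this, ← mul_assoc]
      have key : A g * (((l₁ ++ a :: b :: l₂)).map Θ).prod
          = A g * (((l₁ ++ b :: a :: l₂)).map Θ).prod
            + (A (g * τ) * (((l₁.map ⇑τ ++ a :: l₂)).map Θ).prod
              - A (g * τ) * (((l₁.map ⇑τ ++ b :: l₂)).map Θ).prod) := by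
        simp only [List.map_append, List.map_cons, List.prod_append, List.prod_cons]
        rw [← mul_assoc (A (g * τ)), ← mul_assoc (A (g * τ)), hmm,
          ← mul_assoc (Θ a) (Θ b), hτθ]
        noncomm_ring
      rw [key]
      have hswap := invc_swap l₁ l₂ hba
      refine Submodule.add_mem _ ?_ (Submodule.sub_mem _ ?_ ?_)
      · exact ih₂ (invc (l₁ ++ b :: a :: l₂)) (by omega) _ _ _
          (by simp only [List.length_append, List.length_cons]; omega) le_rfl le_rfl
      · exact ih₁ (l₁.map ⇑τ ++ a :: l₂).length (by simp; omega) _ _ _ _ le_rfl le_rfl le_rfl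
      · exact ih₁ (l₁.map ⇑τ ++ b :: l₂).length (by simp; omega) _ _ _ _ le_rfl le_rfl le_rfl
    · -- b = a : square
      subst heq
      have h := hsq b
      rw [hA1] at h
      have key : A g * (((l₁ ++ b :: b :: l₂)).map Θ).prod
          = (ν - 1) • (A g * (((l₁ ++ b :: l₂)).map Θ).prod)
            + ν • (A g * (((l₁ ++ l₂)).map Θ).prod) := by
        simp only [List.map_append, List.map_cons, List.prod_append, List.prod_cons]
        rw [← mul_assoc (Θ b) (Θ b), h]
        simp only [add_mul, smul_mul_assoc, one_mul, mul_add, mul_smul_comm]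
      rw [key]
      refine Submodule.add_mem _ (Submodule.smul_mem _ _ ?_) (Submodule.smul_mem _ _ ?_)
      · exact ih₁ (l₁ ++ b :: l₂).length (by simp; omega) _ _ _ _ le_rfl le_rfl le_rfl
      · exact ih₁ (l₁ ++ l₂).length (by simp; omega) _ _ _ _ le_rfl le_rfl le_rfl

end Alg


lemma card_inc_le (α : ℕ) (s : Finset (Fin α)) :
    Fintype.card {g : Perm (Fin α) // ∀ i ∈ s, ∀ j ∈ s, i < j → g i < g j}
      ≤ Nat.descFactorial α (α - s.card) := by
  classical
  set T := {g : Perm (Fin α) // ∀ i ∈ s, ∀ j ∈ s, i < j → g i < g j}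
  set Φ : T → ((↥(sᶜ) : Type) ↪ Fin α) :=
    fun g => ⟨fun x => g.1 x.1, fun x y h => Subtype.ext (g.1.injective h)⟩ with hΦ
  have key : ∀ u v : T, (∀ x ∉ s, u.1 x = v.1 x) → s.image u.1 ⊆ s.image v.1 := by
    intro u v huv y hy
    obtain ⟨x, hx, rfl⟩ := Finset.mem_image.mp hy
    by_contra hne
    have hvx : v.1 ((v.1)⁻¹ (u.1 x)) = u.1 x := (v.1).apply_symm_apply _
    have hmem : (v.1)⁻¹ (u.1 x) ∉ s := fun hmem => hne (Finset.mem_image.mpr ⟨_, hmem, hvx⟩)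
    have heq : u.1 ((v.1)⁻¹ (u.1 x)) = u.1 x := by rw [huv _ hmem, hvx]
    have eqq : (v.1)⁻¹ (u.1 x) = x := u.1.injective heq
    exact hmem (by rw [eqq]; exact hx)
  have Φinj : Function.Injective Φ := by
    intro g₁ g₂ h
    have hco : ∀ x : Fin α, x ∉ s → g₁.1 x = g₂.1 x := by
      intro x hx
      exact DFunLike.congr_fun h (⟨x, Finset.mem_compl.mpr hx⟩ : ↥(sᶜ))
    have himg : s.image g₁.1 = s.image g₂.1 :=
      Finset.Subset.antisymm (key g₁ g₂ hco) (key g₂ g₁ fun x hx => (hco x hx).symm)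
    have hcard : (s.image g₁.1).card = s.card := Finset.card_image_of_injective s g₁.1.injective
    have hcard₂ : (s.image g₁.1).card = s.card := hcard
    have hmono : ∀ u : T, StrictMono (fun p : Fin s.card => u.1 (s.orderEmbOfFin rfl p)) := by
      intro u p q hpq
      exact u.2 _ (Finset.orderEmbOfFin_mem s rfl p) _ (Finset.orderEmbOfFin_mem s rfl q)
        ((s.orderEmbOfFin rfl).strictMono hpq)
    have f₁def : (fun p : Fin s.card => g₁.1 (s.orderEmbOfFin rfl p))
        = (s.image g₁.1).orderEmbOfFin hcard :=
      Finset.orderEmbOfFin_unique hcard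
        (fun p => Finset.mem_image_of_mem _ (Finset.orderEmbOfFin_mem s rfl p)) (hmono g₁)
    have f₂def : (fun p : Fin s.card => g₂.1 (s.orderEmbOfFin rfl p))
        = (s.image g₁.1).orderEmbOfFin hcard := by
      refine Finset.orderEmbOfFin_unique hcard ?_ (hmono g₂)
      intro p
      rw [himg]
      exact Finset.mem_image_of_mem _ (Finset.orderEmbOfFin_mem s rfl p)
    have hs : ∀ x ∈ s, g₁.1 x = g₂.1 x := by
      intro x hx
      have hrange : x ∈ Set.range (s.orderEmbOfFin rfl) := by
        rw [Finset.range_orderEmbOfFin]; exact hx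
      obtain ⟨p, hp⟩ := hrange
      rw [← hp]
      exact (congrFun f₁def p).trans (congrFun f₂def p).symm
    refine Subtype.ext (Equiv.ext fun x => ?_)
    by_cases hx : x ∈ s
    · exact hs x hx
    · exact hco x hx
  calc Fintype.card T ≤ Fintype.card ((↥(sᶜ) : Type) ↪ Fin α) :=
        Fintype.card_le_of_injective Φ Φinj
    _ = Nat.descFactorial α (α - s.card) := by
        rw [Fintype.card_embedding_eq, Fintype.card_fin, Fintype.card_coe, Finset.card_compl,
          Fintype.card_fin]

lemma term_eq (α r : ℕ) (hr : r ≤ α) :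
    (Nat.factorial α) ^ 2 / (Nat.factorial (α - r) * (Nat.factorial r) ^ 2)
      = α.choose r * Nat.descFactorial α (α - r) := by
  apply Nat.div_eq_of_eq_mul_left
  · positivity
  · have h1 : α - (α - r) = r := by omega
    have h2 : Nat.factorial r * Nat.descFactorial α (α - r) = Nat.factorial α := by
      have := Nat.factorial_mul_descFactorial (Nat.sub_le α r)
      rwa [h1] at this
    have h3 : α.choose r * Nat.factorial r * Nat.factorial (α - r) = Nat.factorial α :=
      Nat.choose_mul_factorial_mul_factorial hr
    have expand : (α.choose r * Nat.descFactorial α (α - r))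
          * (Nat.factorial (α - r) * (Nat.factorial r) ^ 2)
        = (α.choose r * Nat.factorial r * Nat.factorial (α - r))
          * (Nat.factorial r * Nat.descFactorial α (α - r)) := by ring
    rw [expand, h2, h3, sq]

lemma cardT_le (α : ℕ) :
    Fintype.card {p : Perm (Fin α) × Finset (Fin α) //
        ∀ i ∈ p.2, ∀ j ∈ p.2, i < j → p.1 i < p.1 j}
      ≤ ∑ r ∈ Finset.range (α + 1),
          (Nat.factorial α) ^ 2 / (Nat.factorial (α - r) * (Nat.factorial r) ^ 2) := by
  classical
  have e : Fintype.card {p : Perm (Fin α) × Finset (Fin α) //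
        ∀ i ∈ p.2, ∀ j ∈ p.2, i < j → p.1 i < p.1 j}
      = ∑ s : Finset (Fin α),
          Fintype.card {g : Perm (Fin α) // ∀ i ∈ s, ∀ j ∈ s, i < j → g i < g j} := by
    rw [← Fintype.card_sigma]
    exact Fintype.card_congr
      ⟨fun x => ⟨x.1.2, ⟨x.1.1, x.2⟩⟩, fun y => ⟨(y.2.1, y.1), y.2.2⟩,
        fun x => rfl, fun y => rfl⟩
  rw [e]
  calc ∑ s : Finset (Fin α),
          Fintype.card {g : Perm (Fin α) // ∀ i ∈ s, ∀ j ∈ s, i < j → g i < g j}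
      ≤ ∑ s : Finset (Fin α), Nat.descFactorial α (α - s.card) :=
        Finset.sum_le_sum fun s _ => card_inc_le α s
    _ = ∑ s ∈ (Finset.univ : Finset (Fin α)).powerset, Nat.descFactorial α (α - s.card) := by
        rw [Finset.powerset_univ]
    _ = ∑ r ∈ Finset.range (α + 1), ∑ s ∈ Finset.powersetCard r (Finset.univ : Finset (Fin α)),
          Nat.descFactorial α (α - s.card) := by
        rw [Finset.sum_powerset]
        simp [Finset.card_univ]
    _ = ∑ r ∈ Finset.range (α + 1), α.choose r * Nat.descFactorial α (α - r) := by
        refine Finset.sum_congr rfl fun r _ => ?_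
        rw [Finset.sum_powersetCard r Finset.univ (fun k => Nat.descFactorial α (α - k))]
        simp [Finset.card_univ, smul_eq_mul]
    _ = ∑ r ∈ Finset.range (α + 1),
          (Nat.factorial α) ^ 2 / (Nat.factorial (α - r) * (Nat.factorial r) ^ 2) := by
        refine Finset.sum_congr rfl fun r hr => ?_
        exact (term_eq α r (by simpa using Nat.lt_succ_iff.mp (Finset.mem_range.mp hr))).symm

/-- In any `ℂ`-algebra generated by elements `A(g)` (`g ∈ S_α`) and
`Θ_1, …, Θ_α` satisfying the defining relations of `O[α;ν]`, the monomials
`A(g)·Θ_{i₁}⋯Θ_{i_k}` with `i₁ < ⋯ < i_k` and `g(i₁) < ⋯ < g(i_k)` span;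
hence `dim O[α;ν] ≤ #Π_α = Σ_{r=0}^α (α!)²/((α−r)!(r!)²)`. -/
theorem span_monomials_and_dim_le (α : ℕ) (ν : ℂ) {B : Type} [Ring B] [Algebra ℂ B]
    (A : Perm (Fin α) → B) (Θ : Fin α → B)
    (hgen : Algebra.adjoin ℂ (Set.range A ∪ Set.range Θ) = ⊤)
    (hA : ∀ g₁ g₂, A g₁ * A g₂ = A (g₁ * g₂))
    (hA1 : A 1 = 1)
    (hconj : ∀ (g : Perm (Fin α)) (i : Fin α), A g * Θ i * A g⁻¹ = Θ (g i))
    (hsq : ∀ j, Θ j * Θ j = (ν - 1) • Θ j + ν • A 1)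
    (hcomm : ∀ i j, Θ j * Θ i - Θ i * Θ j = A (Equiv.swap i j) * (Θ j - Θ i))
    (hrel : ∀ i j, (A (Equiv.swap i j) - A 1) * Θ j * (Θ i + A 1) = 0) :
    Submodule.span ℂ {x : B | ∃ (g : Perm (Fin α)) (s : Finset (Fin α)),
        (∀ i ∈ s, ∀ j ∈ s, i < j → g i < g j) ∧
        x = A g * ((s.sort (· ≤ ·)).map Θ).prod} = ⊤ ∧
      Module.finrank ℂ B ≤
        ∑ r ∈ Finset.range (α + 1),
          (Nat.factorial α) ^ 2 / (Nat.factorial (α - r) * (Nat.factorial r) ^ 2) := by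
  classical
  have hsetswap : {x : B | ∃ (g : Perm (Fin α)) (s : Finset (Fin α)),
      (∀ i ∈ s, ∀ j ∈ s, i < j → g i < g j) ∧
      x = A g * ((s.sort (· ≤ ·)).map Θ).prod} = Mset A Θ := rfl
  rw [hsetswap]
  have hmono : ∀ (g : Perm (Fin α)) (l : List (Fin α)),
      A g * (l.map Θ).prod ∈ Submodule.span ℂ (Mset A Θ) := fun g l =>
    spanA hA hA1 hconj hsq hcomm hrel l.length (invc l) (invc (l.map g)) l g
      le_rfl le_rfl le_rfl
  have hone : (1 : B) ∈ Submodule.span ℂ (Mset A Θ) := by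
    have h1 : (1 : B) = A 1 * (([] : List (Fin α)).map Θ).prod := by simp [hA1]
    rw [h1]; exact hmono 1 []
  have hmulgen : ∀ x ∈ Mset A Θ, ∀ y ∈ Mset A Θ,
      x * y ∈ Submodule.span ℂ (Mset A Θ) := by
    rintro x ⟨g, s, -, rfl⟩ y ⟨h, t, -, rfl⟩
    have hmap : ((s.sort (· ≤ ·)).map ⇑h⁻¹).map ⇑h = s.sort (· ≤ ·) := by
      rw [List.map_map]
      have hid : (⇑h ∘ ⇑h⁻¹) = id := by funext z; simp
      rw [hid, List.map_id]
    have step : ((s.sort (· ≤ ·)).map Θ).prod * A h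
        = A h * (((s.sort (· ≤ ·)).map ⇑h⁻¹).map Θ).prod := by
      rw [pushP hA hA1 hconj h, hmap]
    have hPA : A g * ((s.sort (· ≤ ·)).map Θ).prod * (A h * ((t.sort (· ≤ ·)).map Θ).prod)
        = A (g * h) * ((((s.sort (· ≤ ·)).map ⇑h⁻¹) ++ t.sort (· ≤ ·)).map Θ).prod := by
      calc A g * ((s.sort (· ≤ ·)).map Θ).prod * (A h * ((t.sort (· ≤ ·)).map Θ).prod)
          = A g * ((((s.sort (· ≤ ·)).map Θ).prod * A h) * ((t.sort (· ≤ ·)).map Θ).prod) := by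
            rw [mul_assoc, ← mul_assoc (((s.sort (· ≤ ·)).map Θ).prod)]
        _ = A g * (A h * ((((s.sort (· ≤ ·)).map ⇑h⁻¹).map Θ).prod
              * ((t.sort (· ≤ ·)).map Θ).prod)) := by rw [step, mul_assoc]
        _ = A (g * h) * ((((s.sort (· ≤ ·)).map ⇑h⁻¹).map Θ).prod
              * ((t.sort (· ≤ ·)).map Θ).prod) := by rw [← mul_assoc, hA]
        _ = A (g * h) * ((((s.sort (· ≤ ·)).map ⇑h⁻¹) ++ t.sort (· ≤ ·)).map Θ).prod := by
            rw [List.map_append, List.prod_append]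
    rw [hPA]
    exact hmono _ _
  have hmul : ∀ x ∈ Submodule.span ℂ (Mset A Θ), ∀ y ∈ Submodule.span ℂ (Mset A Θ),
      x * y ∈ Submodule.span ℂ (Mset A Θ) := by
    intro x hx y hy
    refine Submodule.span_induction₂ (p := fun x y _ _ => x * y ∈ Submodule.span ℂ (Mset A Θ))
      (fun a b ha hb => hmulgen a ha b hb) ?_ ?_ ?_ ?_ ?_ ?_ hx hy
    · intro y _; rw [zero_mul]; exact Submodule.zero_mem _
    · intro x _; rw [mul_zero]; exact Submodule.zero_mem _
    · intro a b c _ _ _ h1 h2; rw [add_mul]; exact Submodule.add_mem _ h1 h2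
    · intro a b c _ _ _ h1 h2; rw [mul_add]; exact Submodule.add_mem _ h1 h2
    · intro r a b _ _ h1; rw [smul_mul_assoc]; exact Submodule.smul_mem _ _ h1
    · intro r a b _ _ h1; rw [mul_smul_comm]; exact Submodule.smul_mem _ _ h1
  have hsp : Submodule.span ℂ (Mset A Θ) = ⊤ := by
    rw [eq_top_iff]
    rintro x -
    have hx : x ∈ Algebra.adjoin ℂ (Set.range A ∪ Set.range Θ) := by
      rw [hgen]; exact Algebra.mem_top
    refine Algebra.adjoin_induction ?_ ?_ ?_ ?_ hx
    · rintro y (⟨g, rfl⟩ | ⟨k, rfl⟩)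
      · have h1 : A g = A g * (([] : List (Fin α)).map Θ).prod := by simp
        rw [h1]; exact hmono g []
      · have h1 : Θ k = A 1 * (([k] : List (Fin α)).map Θ).prod := by simp [hA1]
        rw [h1]; exact hmono 1 [k]
    · intro r; rw [Algebra.algebraMap_eq_smul_one]; exact Submodule.smul_mem _ _ hone
    · intro a b _ _ h1 h2; exact Submodule.add_mem _ h1 h2
    · intro a b ha hb h1 h2; exact hmul a h1 b h2
  refine ⟨hsp, ?_⟩
  set T := {p : Perm (Fin α) × Finset (Fin α) //
      ∀ i ∈ p.2, ∀ j ∈ p.2, i < j → p.1 i < p.1 j} with hT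
  set F : T → B := fun p => A p.1.1 * ((p.1.2.sort (· ≤ ·)).map Θ).prod with hF
  have hrange : Mset A Θ = Set.range F := by
    ext x
    constructor
    · rintro ⟨g, s, h1, rfl⟩; exact ⟨⟨(g, s), h1⟩, rfl⟩
    · rintro ⟨⟨⟨g, s⟩, h1⟩, rfl⟩; exact ⟨g, s, h1, rfl⟩
  have hle : Module.finrank ℂ (Submodule.span ℂ (Set.range F)) ≤ Fintype.card T := by
    have := finrank_range_le_card (R := ℂ) F
    rwa [Set.finrank] at this
  calc Module.finrank ℂ B = Module.finrank ℂ (⊤ : Submodule ℂ B) := (finrank_top ℂ B).symm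
    _ = Module.finrank ℂ (Submodule.span ℂ (Set.range F)) := by rw [← hsp, hrange]
    _ ≤ Fintype.card T := hle
    _ ≤ ∑ r ∈ Finset.range (α + 1),
          (Nat.factorial α) ^ 2 / (Nat.factorial (α - r) * (Nat.factorial r) ^ 2) := cardT_le α
end

section
/- In the monoid algebra C[Π_α], setting Θ'_j := T_j (the partial identity undefined at j) and A(g) := g for g ∈ S_α, the relations (Θ'_j)² = Θ'_j, Θ'_jΘ'_i = Θ'_iΘ'_j, and (i j)·Θ'_jΘ'_i = Θ'_jΘ'_i hold, and every element of Π_α can be written uniquely as g·T_{i_1}⋯T_{i_k} with i_1<⋯<i_k and g(i_1)<⋯<g(i_k). -/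
open Equiv

/-- The symmetric inverse monoid `Π_α` of partial injections of `Fin α`,
with multiplication given by composition of partial maps
(`(f * g)(x) = f(g(x))`). -/
instance pequivMonoid (α : ℕ) : Monoid (PEquiv (Fin α) (Fin α)) where
  mul f g := g.trans f
  one := PEquiv.refl _
  mul_assoc a b c := (PEquiv.trans_assoc c b a).symm
  one_mul a := PEquiv.trans_refl a
  mul_one a := PEquiv.refl_trans a

/-- `T_j ∈ Π_α`: the identity restricted to the complement of `{j}`. -/
def T {α : ℕ} (j : Fin α) : PEquiv (Fin α) (Fin α) where
  toFun i := if i = j then none else some i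
  invFun i := if i = j then none else some i
  inv a b := by
    try simp only [Option.mem_def]
    split_ifs <;> simp_all [eq_comm]

lemma mul_apply' {α : ℕ} (f g : PEquiv (Fin α) (Fin α)) (a : Fin α) :
    (f * g) a = (g a).bind f := rfl

lemma T_apply {α : ℕ} (j a : Fin α) : T j a = if a = j then none else some a := rfl

lemma prod_map_T_apply {α : ℕ} (l : List (Fin α)) (a : Fin α) :
    ((l.map T).prod : PEquiv (Fin α) (Fin α)) a = if a ∈ l then none else some a := by
  induction l with
  | nil => simp; rfl
  | cons b l ih =>
    simp only [List.map_cons, List.prod_cons, mul_apply', ih, List.mem_cons]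
    by_cases h : a ∈ l
    · simp [h]
    · simp only [h, if_false, Option.bind_some, T_apply, or_false]

lemma factor_iff {α : ℕ} (g : Perm (Fin α)) (s : Finset (Fin α)) (x : PEquiv (Fin α) (Fin α)) :
    x = g.toPEquiv * ((s.sort (· ≤ ·)).map T).prod ↔
      ∀ a, x a = if a ∈ s then none else some (g a) := by
  constructor
  · rintro rfl a
    rw [mul_apply', prod_map_T_apply]
    by_cases h : a ∈ s
    · simp [h, Finset.mem_sort]
    · simp [h, Finset.mem_sort, Equiv.toPEquiv_apply]
  · intro h
    ext a b
    rw [h a, mul_apply', prod_map_T_apply]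
    by_cases hs : a ∈ s
    · simp [hs, Finset.mem_sort]
    · simp [hs, Finset.mem_sort, Equiv.toPEquiv_apply]

/-- In the monoid algebra `C[Π_α]`, setting `Θ'_j := T_j` and `A(g) := g` for
`g ∈ S_α`, the relations `(Θ'_j)² = Θ'_j`, `Θ'_jΘ'_i = Θ'_iΘ'_j` and
`(i j)·Θ'_jΘ'_i = Θ'_jΘ'_i` hold, and every element of `Π_α` can be written
uniquely as `g·T_{i₁}⋯T_{i_k}` with `i₁ < ⋯ < i_k` and `g(i₁) < ⋯ < g(i_k)`. -/
theorem pequiv_relations_and_unique_factorization (α : ℕ) :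
    (∀ j : Fin α, T j * T j = T j) ∧
    (∀ i j : Fin α, T j * T i = T i * T j) ∧
    (∀ i j : Fin α, (Equiv.swap i j).toPEquiv * (T j * T i) = T j * T i) ∧
    (∀ x : PEquiv (Fin α) (Fin α),
      ∃! p : Perm (Fin α) × Finset (Fin α),
        (∀ i ∈ p.2, ∀ j ∈ p.2, i < j → p.1 i < p.1 j) ∧
        x = p.1.toPEquiv * ((p.2.sort (· ≤ ·)).map T).prod) := by
  refine ⟨?_, ?_, ?_, ?_⟩
  · intro j
    ext a b
    rw [mul_apply', T_apply]
    split_ifs with h <;> simp [T_apply, h]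
  · intro i j
    ext a b
    rw [mul_apply', mul_apply', T_apply, T_apply]
    split_ifs with h1 h2 h2 <;> simp [T_apply, h1, h2]
  · intro i j
    ext a b
    rw [mul_apply', mul_apply', T_apply]
    split_ifs with h1
    · simp
    · rw [Option.bind_some, T_apply]
      split_ifs with h2
      · simp
      · simp [Equiv.toPEquiv_apply, Equiv.swap_apply_of_ne_of_ne h1 h2]
  · intro x
    classical
    -- the set where `x` is undefined and the set missed by the range of `x`
    set s : Finset (Fin α) := Finset.univ.filter (fun i => x i = none) with hs
    set t : Finset (Fin α) := Finset.univ.filter (fun j => x.symm j = none) with ht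
    have hmems : ∀ i, i ∈ s ↔ x i = none := by simp [hs]
    have hmemt : ∀ j, j ∈ t ↔ x.symm j = none := by simp [ht]
    -- cardinalities agree
    have hsome : ∀ i, i ∉ s → (x i).isSome := fun i h =>
      Option.ne_none_iff_isSome.mp (fun hn => h ((hmems i).2 hn))
    have tsome : ∀ j, j ∉ t → (x.symm j).isSome := fun j h =>
      Option.ne_none_iff_isSome.mp (fun hn => h ((hmemt j).2 hn))
    have hxs : ∀ i (h : (x i).isSome), x.symm ((x i).get h) = some i := fun i h =>
      x.eq_some_iff.2 (Option.some_get h).symm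
    have hxt : ∀ j (h : (x.symm j).isSome), x ((x.symm j).get h) = some j := fun j h => by
      have := x.symm.eq_some_iff.2 (Option.some_get h).symm
      simpa using this
    have hcard : sᶜ.card = tᶜ.card := by
      refine Finset.card_bij'
        (fun a ha => (x a).get (hsome a (Finset.mem_compl.mp ha)))
        (fun b hb => (x.symm b).get (tsome b (Finset.mem_compl.mp hb)))
        ?_ ?_ ?_ ?_
      · intro a ha
        rw [Finset.mem_compl, hmemt, hxs]
        simp
      · intro b hb
        rw [Finset.mem_compl, hmems, hxt]
        simp
      · intro a ha
        simp [hxs]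
      · intro b hb
        simp [hxt]
    have hst : t.card = s.card := by
      have h1 := Finset.card_compl_add_card s
      have h2 := Finset.card_compl_add_card t
      omega
    -- an order isomorphism from s to t
    let iso : {i // i ∈ s} ≃o {j // j ∈ t} :=
      (s.orderIsoOfFin rfl).symm.trans (t.orderIsoOfFin hst)
    -- the candidate permutation
    let g₀ : Fin α → Fin α := fun i =>
      if h : i ∈ s then (iso ⟨i, h⟩ : Fin α)
      else (x i).get (by simp only [hmems, ← Option.ne_none_iff_isSome] at h ⊢; exact h)
    have hg₀s : ∀ i (h : i ∈ s), g₀ i ∈ t := fun i h => by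
      simp only [g₀, dif_pos h]; exact (iso ⟨i, h⟩).2
    have hg₀x : ∀ i (h : i ∉ s), x i = some (g₀ i) := fun i h => by
      simp only [g₀, dif_neg h]; exact (Option.some_get _).symm
    have hg₀ns : ∀ i (h : i ∉ s), g₀ i ∉ t := fun i h => by
      rw [hmemt, (x.eq_some_iff).2 (hg₀x i h)]; simp
    have hg₀mem : ∀ i (h : i ∈ s), g₀ i = iso ⟨i, h⟩ := fun i h => dif_pos h
    have hinj : Function.Injective g₀ := by
      intro i₁ i₂ h
      by_cases h1 : i₁ ∈ s <;> by_cases h2 : i₂ ∈ s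
      · have h' : (iso ⟨i₁, h1⟩ : Fin α) = iso ⟨i₂, h2⟩ := by
          rw [← hg₀mem i₁ h1, ← hg₀mem i₂ h2, h]
        exact congrArg Subtype.val (iso.injective (Subtype.ext h'))
      · exact absurd (h ▸ hg₀s i₁ h1) (hg₀ns i₂ h2)
      · exact absurd (h ▸ hg₀ns i₁ h1) (fun hn => hn (hg₀s i₂ h2))
      · have e1 := hg₀x i₁ h1
        have e2 := hg₀x i₂ h2
        rw [h] at e1
        have f1 : x.symm (g₀ i₂) = some i₁ := x.eq_some_iff.2 e1
        have f2 : x.symm (g₀ i₂) = some i₂ := x.eq_some_iff.2 e2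
        rw [f2] at f1
        exact (Option.some_injective _ f1).symm
    have hbij : Function.Bijective g₀ := Finite.injective_iff_bijective.mp hinj
    let g : Perm (Fin α) := Equiv.ofBijective g₀ hbij
    have hgdef : ∀ i, g i = g₀ i := fun i => rfl
    -- key characterization of pairs satisfying the factorization
    have hchar : ∀ (h : Perm (Fin α)),
        (∀ a, x a = if a ∈ s then none else some (h a)) →
        (∀ i, i ∈ s → h i ∈ t) ∧ (∀ j ∈ t, ∃ i ∈ s, h i = j) := by
      intro h hfac
      constructor
      · intro i hi
        by_contra hnt
        rw [hmemt] at hnt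
        obtain ⟨i', hi'⟩ := Option.ne_none_iff_exists'.mp hnt
        have hx : x i' = some (h i) := (x.eq_some_iff).1 hi'
        have hi's : i' ∉ s := by rw [hmems, hx]; simp
        have := hfac i'
        rw [if_neg hi's, hx] at this
        have : i' = i := h.injective (Option.some_injective _ this.symm)
        subst this
        exact hi's hi
      · intro j hj
        obtain ⟨i, rfl⟩ := h.surjective j
        refine ⟨i, ?_, rfl⟩
        by_contra hi
        have := hfac i
        rw [if_neg hi] at this
        rw [hmemt, (x.eq_some_iff).2 this] at hj
        simp at hj
    -- uniqueness of strictly monotone bijections s → t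
    have huniq : ∀ (h : Perm (Fin α)),
        (∀ i ∈ s, ∀ j ∈ s, i < j → h i < h j) →
        (∀ a, x a = if a ∈ s then none else some (h a)) → h = g := by
      intro h hmono hfac
      obtain ⟨hin, hsurj⟩ := hchar h hfac
      obtain ⟨gin, gsurj⟩ := hchar g (by
        intro a
        by_cases ha : a ∈ s
        · simp [ha, (hmems a).1 ha]
        · simp [ha, hgdef, hg₀x a ha])
      -- restrictions as maps between subtypes
      let rh : {i // i ∈ s} → {j // j ∈ t} := fun i => ⟨h i, hin i i.2⟩
      let rg : {i // i ∈ s} → {j // j ∈ t} := fun i => ⟨g i, gin i i.2⟩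
      have hrh : StrictMono rh := fun a b hab =>
        Subtype.mk_lt_mk.mpr (hmono a a.2 b b.2 (Subtype.mk_lt_mk.mp hab))
      have hrg : StrictMono rg := fun a b hab => by
        show (⟨g a.1, _⟩ : {j // j ∈ t}) < ⟨g b.1, _⟩
        rw [Subtype.mk_lt_mk, hgdef, hgdef, hg₀mem _ a.2, hg₀mem _ b.2]
        exact Subtype.coe_lt_coe.mpr (iso.strictMono hab)
      have hrhsurj : Function.Surjective rh := by
        rintro ⟨j, hj⟩
        obtain ⟨i, hi, hij⟩ := hsurj j hj
        exact ⟨⟨i, hi⟩, Subtype.ext hij⟩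
      have hrgsurj : Function.Surjective rg := by
        rintro ⟨j, hj⟩
        obtain ⟨i, hi, hij⟩ := gsurj j hj
        exact ⟨⟨i, hi⟩, Subtype.ext hij⟩
      have : hrh.orderIsoOfSurjective _ hrhsurj = hrg.orderIsoOfSurjective _ hrgsurj :=
        Subsingleton.elim _ _
      have hrhg : rh = rg := by
        rw [← hrh.coe_orderIsoOfSurjective _ hrhsurj, ← hrg.coe_orderIsoOfSurjective _ hrgsurj,
          this]
      refine Equiv.ext fun i => ?_
      by_cases hi : i ∈ s
      · exact congrArg Subtype.val (congrFun hrhg ⟨i, hi⟩)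
      · have e1 := hfac i
        rw [if_neg hi] at e1
        rw [hg₀x i hi] at e1
        exact Option.some_injective _ e1.symm
    refine ⟨(g, s), ⟨?_, ?_⟩, ?_⟩
    · intro i hi j hj hij
      show g i < g j
      rw [hgdef, hgdef, hg₀mem i hi, hg₀mem j hj]
      exact Subtype.coe_lt_coe.mpr (iso.strictMono (Subtype.mk_lt_mk.mpr hij))
    · rw [factor_iff]
      intro a
      by_cases ha : a ∈ s
      · simp [ha, (hmems a).1 ha]
      · simp [ha, hgdef, hg₀x a ha]
    · rintro ⟨h, s'⟩ ⟨hmono, hfac⟩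
      rw [factor_iff] at hfac
      have hs' : s' = s := by
        ext a
        rw [hmems]
        constructor
        · intro ha; rw [hfac a, if_pos ha]
        · intro ha
          by_contra hn
          rw [hfac a, if_neg hn] at ha
          exact absurd ha (by simp)
      subst hs'
      have := huniq h hmono hfac
      simp [this]
end
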